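/- Let X be a normed ring, let r be a natural number with r ≥ 2 and p ≥ 0 a real number, and let f, g : 𝓘 → X satisfy A := ‖f‖²_{−r,−p} < ∞ and B := ‖g‖²_{−r,−p} < ∞. Let k > 1 be real, set q = p − 1 + k, and let s be a natural number with s ≥ r. Then the Wick product f ◊ g satisfies ∑_{γ∈𝓘} γ! · ‖(f ◊ g)_γ‖² · ((s^{|γ|³})!)^{−1} · (2ℕ)^{−qγ} ≤ M · A · B, where M = ∑_{γ∈𝓘} (2ℕ)^{−kγ} < ∞; in particular ‖f ◊ g‖²_{−s,−q} is finite. -/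

import Mathlib

abbrev MultiIndex : Type := ℕ →₀ ℕ

/-- `|α| = ∑ₙ αₙ` -/
def msize (α : MultiIndex) : ℕ := α.sum fun _ k => k

/-- `α! = ∏ₙ (αₙ)!` -/
def mfact (α : MultiIndex) : ℕ := α.prod fun _ k => k.factorial

/-- `(2ℕ)^{cα} = ∏ₙ (2n)^{c·αₙ}`; the index `n : ℕ` stands for the position `n+1 ≥ 1`. -/
noncomputable def wt (c : ℝ) (α : MultiIndex) : ℝ :=
  α.prod fun n k => (2 * ((n : ℝ) + 1)) ^ (c * (k : ℝ))


/-- The Wick product: `(f ◊ g)_γ = ∑_{β ≤ γ} f_β · g_{γ-β}`. -/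
noncomputable def wick {X : Type*} [NormedRing X] (f g : MultiIndex → X) :
    MultiIndex → X :=
  fun γ => ∑ p ∈ Finset.HasAntidiagonal.antidiagonal γ, f p.1 * g p.2

/-- The summand of the squared `(FS)_{-r,-p}`-norm:
`α! · ‖f_α‖² · ((r^{|α|³})!)⁻¹ · (2ℕ)^{-pα}`. -/
noncomputable def fsTerm {X : Type*} [NormedRing X] (r : ℕ) (p : ℝ)
    (f : MultiIndex → X) (α : MultiIndex) : ℝ :=
  (mfact α : ℝ) * ‖f α‖ ^ 2 * ((r ^ (msize α) ^ 3).factorial : ℝ)⁻¹ * wt (-p) α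



set_option maxHeartbeats 1000000

namespace Aux

open Finset

lemma B_pos (n : ℕ) : (0:ℝ) < 2 * ((n : ℝ) + 1) := by positivity

lemma two_le_B (n : ℕ) : (2:ℝ) ≤ 2 * ((n : ℝ) + 1) := by
  nlinarith [Nat.cast_nonneg (α := ℝ) n]

lemma rpow_base_anti {u v c : ℝ} (hu : 0 < u) (huv : u ≤ v) (hc : c ≤ 0) :
    v ^ c ≤ u ^ c := by
  have hv : 0 < v := lt_of_lt_of_le hu huv
  have h1 : u ^ c = (u ^ (-c))⁻¹ := by
    rw [← Real.rpow_neg hu.le]; ring_nf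
  have h2 : v ^ c = (v ^ (-c))⁻¹ := by
    rw [← Real.rpow_neg hv.le]; ring_nf
  rw [h1, h2]
  have := Real.rpow_le_rpow hu.le huv (neg_nonneg.2 hc)
  exact inv_anti₀ (Real.rpow_pos_of_pos hu _) this

lemma wt_eq_prod (c : ℝ) (α : MultiIndex) :
    wt c α = ∏ n ∈ α.support, ((2 * ((n : ℝ) + 1)) ^ c) ^ (α n) := by
  unfold wt Finsupp.prod
  refine Finset.prod_congr rfl fun n _ => ?_
  show (2 * ((n : ℝ) + 1)) ^ (c * ((α n : ℕ) : ℝ)) = _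
  rw [← Real.rpow_natCast ((2 * ((n : ℝ) + 1)) ^ c) (α n),
    ← Real.rpow_mul (B_pos n).le]

lemma wt_pos (c : ℝ) (α : MultiIndex) : 0 < wt c α := by
  rw [wt_eq_prod]
  exact Finset.prod_pos fun n _ => pow_pos (Real.rpow_pos_of_pos (B_pos n) _) _

lemma wt_nonneg (c : ℝ) (α : MultiIndex) : 0 ≤ wt c α := (wt_pos c α).le

lemma wt_ne_zero (c : ℝ) (α : MultiIndex) : wt c α ≠ 0 := (wt_pos c α).ne'

lemma wt_zero (c : ℝ) : wt c 0 = 1 := by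
  unfold wt; exact Finsupp.prod_zero_index

lemma wt_add (c : ℝ) (α β : MultiIndex) : wt c (α + β) = wt c α * wt c β := by
  unfold wt
  refine Finsupp.prod_add_index' (fun a => ?_) (fun a b₁ b₂ => ?_)
  · rw [Nat.cast_zero, mul_zero, Real.rpow_zero]
  · rw [Nat.cast_add, show c * ((b₁:ℝ) + (b₂:ℝ)) = c * b₁ + c * b₂ from by ring,
      Real.rpow_add (B_pos a)]

lemma wt_exp_add (c d : ℝ) (α : MultiIndex) : wt (c + d) α = wt c α * wt d α := by
  rw [wt_eq_prod, wt_eq_prod, wt_eq_prod, ← Finset.prod_mul_distrib]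
  refine Finset.prod_congr rfl fun n _ => ?_
  rw [Real.rpow_add (B_pos n), mul_pow]

lemma wt_single (c : ℝ) (j m : ℕ) :
    wt c (Finsupp.single j m) = ((2 * ((j : ℝ) + 1)) ^ c) ^ m := by
  unfold wt
  rw [Finsupp.prod_single_index]
  · show (2 * ((j : ℝ) + 1)) ^ (c * ((m : ℕ) : ℝ)) = _
    rw [← Real.rpow_natCast ((2 * ((j : ℝ) + 1)) ^ c) m, ← Real.rpow_mul (B_pos j).le]
  · rw [Nat.cast_zero, mul_zero, Real.rpow_zero]

lemma msize_eq_sum (α : MultiIndex) : msize α = ∑ n ∈ α.support, α n := rfl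

lemma wt_le_pow {c : ℝ} (hc : c ≤ 0) (α : MultiIndex) :
    wt c α ≤ ((2 : ℝ) ^ c) ^ (msize α) := by
  rw [wt_eq_prod, msize_eq_sum, ← Finset.prod_pow_eq_pow_sum]
  refine Finset.prod_le_prod
    (fun n _ => pow_nonneg (Real.rpow_nonneg (B_pos n).le c) _) (fun n _ => ?_)
  exact pow_le_pow_left₀ (Real.rpow_nonneg (B_pos n).le c)
    (rpow_base_anti two_pos (two_le_B n) hc) _

lemma msize_add (α β : MultiIndex) : msize (α + β) = msize α + msize β := by
  unfold msize
  exact Finsupp.sum_add_index' (fun _ => rfl) (fun _ _ _ => rfl)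

lemma msize_eq_zero {α : MultiIndex} (h : msize α = 0) : α = 0 := by
  rw [msize_eq_sum] at h
  ext n
  by_cases hn : n ∈ α.support
  · exact (Finset.sum_eq_zero_iff.1 h) n hn
  · simpa using Finsupp.notMem_support_iff.1 hn

lemma mfact_pos (α : MultiIndex) : 0 < mfact α :=
  Finset.prod_pos fun _ _ => Nat.factorial_pos _

lemma mfact_zero : mfact 0 = 1 := Finsupp.prod_zero_index


-- ℕ-combinatorics
lemma choose_le_two_pow (n i : ℕ) : n.choose i ≤ 2 ^ n := by
  by_cases h : i ≤ n
  · calc n.choose i ≤ ∑ j ∈ Finset.range (n + 1), n.choose j :=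
        Finset.single_le_sum (fun j _ => Nat.zero_le _)
          (Finset.mem_range.2 (Nat.lt_succ_of_le h))
    _ = 2 ^ n := Nat.sum_range_choose n
  · rw [Nat.choose_eq_zero_of_lt (Nat.lt_of_not_le h)]; exact Nat.zero_le _

lemma add_factorial_le (a b : ℕ) : (a + b).factorial ≤ 2 ^ (a + b) * (a.factorial * b.factorial) := by
  have h := Nat.choose_mul_factorial_mul_factorial (Nat.le_add_right a b)
  have h2 : a + b - a = b := by omega
  rw [h2] at h
  calc (a + b).factorial = (a + b).choose a * a.factorial * b.factorial := h.symm
  _ ≤ 2 ^ (a + b) * a.factorial * b.factorial := by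
      exact Nat.mul_le_mul_right _ (Nat.mul_le_mul_right _ (choose_le_two_pow _ _))
  _ = 2 ^ (a + b) * (a.factorial * b.factorial) := by ring

lemma support_subset_add_left (β δ : MultiIndex) : β.support ⊆ (β + δ).support := by
  intro n hn
  rw [Finsupp.mem_support_iff] at hn ⊢
  rw [Finsupp.add_apply]
  omega

lemma mfact_eq_prod_of_subset {β : MultiIndex} {S : Finset ℕ} (h : β.support ⊆ S) :
    mfact β = ∏ n ∈ S, (β n).factorial := by
  unfold mfact
  exact Finsupp.prod_of_support_subset β h _ (fun i _ => rfl)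

lemma msize_eq_sum_of_subset {β : MultiIndex} {S : Finset ℕ} (h : β.support ⊆ S) :
    msize β = ∑ n ∈ S, β n := by
  unfold msize
  exact Finsupp.sum_of_support_subset β h _ (fun i _ => rfl)

lemma mfact_add_le (β δ : MultiIndex) :
    mfact (β + δ) ≤ 2 ^ msize (β + δ) * (mfact β * mfact δ) := by
  set S := (β + δ).support with hS
  have hβ : β.support ⊆ S := support_subset_add_left β δ
  have hδ : δ.support ⊆ S := by
    rw [hS, add_comm β δ]; exact support_subset_add_left δ β
  rw [mfact_eq_prod_of_subset hβ, mfact_eq_prod_of_subset hδ,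
    mfact_eq_prod_of_subset (le_refl S), msize_eq_sum_of_subset (le_refl S),
    ← Finset.prod_pow_eq_pow_sum]
  calc ∏ n ∈ S, ((β + δ) n).factorial
      ≤ ∏ n ∈ S, (2 ^ ((β + δ) n) * ((β n).factorial * (δ n).factorial)) := by
        refine Finset.prod_le_prod' fun n _ => ?_
        rw [Finsupp.add_apply]
        exact add_factorial_le (β n) (δ n)
    _ = (∏ n ∈ S, 2 ^ ((β + δ) n)) * ((∏ n ∈ S, (β n).factorial) * ∏ n ∈ S, (δ n).factorial) := by
        rw [Finset.prod_mul_distrib, Finset.prod_mul_distrib]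

lemma card_antidiagonal_le (γ : MultiIndex) :
    (Finset.HasAntidiagonal.antidiagonal γ).card ≤ 2 ^ msize γ := by
  have h1 : (Finset.HasAntidiagonal.antidiagonal γ).card ≤ (Finset.Iic γ).card := by
    refine Finset.card_le_card_of_injOn Prod.fst (fun z hz => ?_) ?_
    · rw [Finset.mem_coe, Finset.HasAntidiagonal.mem_antidiagonal] at hz
      rw [Finset.mem_coe, Finset.mem_Iic, Finsupp.le_def]
      intro n
      rw [← hz, Finsupp.add_apply]
      omega
    · intro z hz w hw h
      rw [Finset.mem_coe, Finset.HasAntidiagonal.mem_antidiagonal] at hz hw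
      have h2 : z.2 = w.2 := by
        have := hz.trans hw.symm
        rw [h] at this
        exact add_left_cancel this
      exact Prod.ext h h2
  have h2 : (Finset.Iic γ).card = ∏ n ∈ γ.support, (γ n + 1) := by
    rw [Finsupp.card_Iic]
    exact Finset.prod_congr rfl fun n _ => Nat.card_Iic _
  calc (Finset.HasAntidiagonal.antidiagonal γ).card ≤ ∏ n ∈ γ.support, (γ n + 1) := h1.trans h2.le
  _ ≤ ∏ n ∈ γ.support, 2 ^ (γ n) := Finset.prod_le_prod' fun n _ => by
        have := Nat.lt_two_pow_self (n := γ n); omega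
  _ = 2 ^ msize γ := by rw [Finset.prod_pow_eq_pow_sum, msize_eq_sum]


lemma two_le_pow_of_one_le {r m : ℕ} (hr : 2 ≤ r) (hm : 1 ≤ m) : 2 ≤ r ^ m :=
  calc 2 = 2 ^ 1 := rfl
  _ ≤ r ^ m := Nat.pow_le_pow_left hr 1 |>.trans (Nat.pow_le_pow_right (by omega) hm)

lemma factD {a b r s : ℕ} (ha : 1 ≤ a) (hb : 1 ≤ b) (hr : 2 ≤ r) (hrs : r ≤ s) :
    (r ^ a ^ 3).factorial * (r ^ b ^ 3).factorial * (8 ^ (a + b)).factorial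
      ≤ (s ^ (a + b) ^ 3).factorial := by
  set n := a + b with hn
  set x := r ^ a ^ 3 with hx
  set y := r ^ b ^ 3 with hy
  set w := r ^ (3 * (a * (b * n))) with hw
  have hx2 : 2 ≤ x := two_le_pow_of_one_le hr (Nat.one_le_iff_ne_zero.2 (pow_ne_zero _ (by omega)))
  have hy2 : 2 ≤ y := two_le_pow_of_one_le hr (Nat.one_le_iff_ne_zero.2 (pow_ne_zero _ (by omega)))
  have hw8 : 8 ^ n ≤ w := by
    have h1 : (8:ℕ) ^ n = 2 ^ (3 * n) := by
      rw [pow_mul]; norm_num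
    rw [h1, hw]
    calc 2 ^ (3 * n) ≤ r ^ (3 * n) := Nat.pow_le_pow_left hr _
    _ ≤ r ^ (3 * (a * (b * n))) := Nat.pow_le_pow_right (by omega)
        (by have : 1 ≤ a * b := Nat.one_le_iff_ne_zero.2 (by positivity); nlinarith)
  have hw2 : 2 ≤ w := le_trans (by norm_num : (2:ℕ) ≤ 8 ^ 1 )
      ((Nat.pow_le_pow_right (by norm_num) (by omega)).trans hw8)
  have hsum : x + y + 8 ^ n ≤ s ^ n ^ 3 := by
    have h1 : x + y ≤ x * y := Nat.add_le_mul hx2 hy2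
    have h2 : x * y + w ≤ (x * y) * w := Nat.add_le_mul (by nlinarith) hw2
    have h3 : x * y * w = r ^ (n ^ 3) := by
      rw [hx, hy, hw, ← pow_add, ← pow_add]
      congr 1
      rw [hn]; ring
    have h4 : r ^ n ^ 3 ≤ s ^ n ^ 3 := Nat.pow_le_pow_left hrs _
    omega
  calc x.factorial * y.factorial * (8 ^ n).factorial
      ≤ (x + y).factorial * (8 ^ n).factorial := by
        have := Nat.factorial_mul_factorial_dvd_factorial_add x y
        exact Nat.mul_le_mul_right _ (Nat.le_of_dvd (Nat.factorial_pos _) this)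
    _ ≤ (x + y + 8 ^ n).factorial :=
        Nat.le_of_dvd (Nat.factorial_pos _)
          (Nat.factorial_mul_factorial_dvd_factorial_add (x + y) (8 ^ n))
    _ ≤ (s ^ n ^ 3).factorial := Nat.factorial_le hsum

lemma fact63 {n : ℕ} (hn : 1 ≤ n) : 63 * 8 ^ n ≤ (8 ^ n).factorial := by
  rcases n with _ | m
  · omega
  rcases m with _ | m
  · norm_num [Nat.factorial]
  · -- n = m + 2, 8^n >= 64
    set mm := 8 ^ (m + 2) with hmm
    have h64 : 64 ≤ mm := by
      calc (64:ℕ) = 8 ^ 2 := by norm_num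
      _ ≤ 8 ^ (m + 2) := Nat.pow_le_pow_right (by norm_num) (by omega)
    obtain ⟨q, hq⟩ : ∃ q, mm = q + 1 := ⟨mm - 1, by omega⟩
    rw [hq, Nat.factorial_succ]
    have h2 : 63 ≤ q.factorial := le_trans (by omega) (Nat.self_le_factorial q)
    calc 63 * (q + 1) = (q + 1) * 63 := by ring
    _ ≤ (q + 1) * q.factorial := Nat.mul_le_mul_left _ h2

section Mlow
variable {k : ℝ} (hk : 1 < k)

noncomputable def tk (k : ℝ) : ℝ := (2:ℝ) ^ (-k)

lemma tk_pos : 0 < tk k := Real.rpow_pos_of_pos two_pos _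

include hk

lemma tk_le_half : tk k ≤ 1 / 2 := by
  unfold tk
  calc (2:ℝ) ^ (-k) ≤ (2:ℝ) ^ (-1 : ℝ) :=
      Real.rpow_le_rpow_of_exponent_le one_le_two (by linarith)
  _ = 1 / 2 := by rw [Real.rpow_neg_one]; norm_num

lemma wt_phi (z : ℕ × ℕ) :
    wt (-k) (Finsupp.single 0 z.1 + Finsupp.single 1 z.2)
      = (tk k) ^ z.1 * (tk k * tk k) ^ z.2 := by
  rw [wt_add, wt_single, wt_single]
  have h0 : (2 * ((0:ℕ) + 1) : ℝ) = 2 := by norm_num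
  have h1 : (2 * (((1:ℕ):ℝ) + 1) : ℝ) = 2 * 2 := by norm_num
  rw [h0, h1]
  have h2 : (2 * 2 : ℝ) ^ (-k) = tk k * tk k := by
    rw [Real.mul_rpow two_pos.le two_pos.le]; rfl
  rw [h2]
  rfl

lemma Mlow_le (hM : Summable (fun γ : MultiIndex => wt (-k) γ)) :
    (1 - tk k)⁻¹ * (1 - tk k * tk k)⁻¹ ≤ ∑' γ : MultiIndex, wt (-k) γ := by
  have ht0 : 0 < tk k := tk_pos
  have ht1 : tk k < 1 := lt_of_le_of_lt (tk_le_half hk) (by norm_num)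
  have ht20 : 0 ≤ tk k * tk k := by positivity
  have ht21 : tk k * tk k < 1 := by nlinarith
  have hg1 : Summable (fun a : ℕ => (tk k) ^ a) := summable_geometric_of_lt_one ht0.le ht1
  have hg2 : Summable (fun b : ℕ => (tk k * tk k) ^ b) := summable_geometric_of_lt_one ht20 ht21
  have hpair : Summable (fun z : ℕ × ℕ => (tk k) ^ z.1 * (tk k * tk k) ^ z.2) :=
    hg1.mul_of_nonneg hg2 (fun a => pow_nonneg ht0.le a) (fun b => pow_nonneg ht20 b)
  have hφinj : Function.Injective
      (fun z : ℕ × ℕ => Finsupp.single 0 z.1 + Finsupp.single 1 z.2) := by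
    intro z w h
    have h0 := congrArg (fun η : MultiIndex => η 0) h
    have h1 := congrArg (fun η : MultiIndex => η 1) h
    simp [Finsupp.single_apply] at h0 h1
    exact Prod.ext h0 h1
  calc (1 - tk k)⁻¹ * (1 - tk k * tk k)⁻¹
      = (∑' a : ℕ, (tk k) ^ a) * (∑' b : ℕ, (tk k * tk k) ^ b) := by
        rw [tsum_geometric_of_lt_one ht0.le ht1, tsum_geometric_of_lt_one ht20 ht21]
    _ = ∑' z : ℕ × ℕ, (tk k) ^ z.1 * (tk k * tk k) ^ z.2 := Summable.tsum_mul_tsum hg1 hg2 hpair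
    _ ≤ ∑' γ : MultiIndex, wt (-k) γ :=
        Summable.tsum_le_tsum_of_inj _ hφinj (fun c _ => wt_nonneg _ _)
          (fun z => le_of_eq (wt_phi hk z).symm) hpair hM

end Mlow

noncomputable def xg (k : ℝ) (n : ℕ) : ℝ := (2 * ((n : ℝ) + 1)) ^ (-k)

section Summab
variable {k : ℝ} (hk : 1 < k)

lemma xg_pos (n : ℕ) : 0 < xg k n := Real.rpow_pos_of_pos (B_pos n) _

include hk

lemma xg_le_half (n : ℕ) : xg k n ≤ 1 / 2 := by
  unfold xg
  calc (2 * ((n : ℝ) + 1)) ^ (-k) ≤ (2:ℝ) ^ (-k) :=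
      rpow_base_anti two_pos (two_le_B n) (by linarith)
  _ ≤ (2:ℝ) ^ (-1 : ℝ) :=
      Real.rpow_le_rpow_of_exponent_le one_le_two (by linarith)
  _ = 1 / 2 := by
      rw [Real.rpow_neg_one]; norm_num

lemma xg_summable : Summable (xg k) := by
  have h1 : Summable (fun n : ℕ => ((n : ℝ) + 1) ^ (-k)) := by
    have h0 : Summable (fun n : ℕ => ((n : ℝ)) ^ (-k)) :=
      Real.summable_nat_rpow.2 (by linarith)
    have := (summable_nat_add_iff (f := fun n : ℕ => ((n : ℝ)) ^ (-k)) 1).2 h0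
    refine this.congr fun n => ?_
    push_cast
    rfl
  refine h1.of_nonneg_of_le (fun n => (xg_pos n).le) (fun n => ?_)
  exact rpow_base_anti (by positivity) (by nlinarith [Nat.cast_nonneg (α := ℝ) n])
    (by linarith)

lemma geom_partial_le (n K : ℕ) :
    ∑ m ∈ Finset.range (K + 1), (xg k n) ^ m ≤ (1 - xg k n)⁻¹ := by
  have hx0 : 0 ≤ xg k n := (xg_pos n).le
  have hx1 : xg k n < 1 := lt_of_le_of_lt (xg_le_half hk n) (by norm_num)
  calc ∑ m ∈ Finset.range (K + 1), (xg k n) ^ m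
      ≤ ∑' m : ℕ, (xg k n) ^ m :=
        Summable.sum_le_tsum _ (fun m _ => pow_nonneg hx0 m) (summable_geometric_of_lt_one hx0 hx1)
  _ = (1 - xg k n)⁻¹ := tsum_geometric_of_lt_one hx0 hx1

omit hk in
lemma wt_erase_single (η : MultiIndex) (N : ℕ) :
    wt (-k) η = wt (-k) (η.erase N) * (xg k N) ^ (η N) := by
  conv_lhs => rw [← Finsupp.single_add_erase N η]
  rw [wt_add, wt_single, mul_comm]
  rfl

lemma box (N : ℕ) : ∀ (U : Finset MultiIndex),
    (∀ η ∈ U, ∀ n, N ≤ n → η n = 0) →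
    ∑ η ∈ U, wt (-k) η ≤ ∏ n ∈ Finset.range N, (1 - xg k n)⁻¹ := by
  induction N with
  | zero =>
    intro U hU
    have hsub : U ⊆ {0} := by
      intro η hη
      rw [Finset.mem_singleton]
      ext n
      exact hU η hη n (Nat.zero_le n)
    calc ∑ η ∈ U, wt (-k) η ≤ ∑ η ∈ ({0} : Finset MultiIndex), wt (-k) η :=
        Finset.sum_le_sum_of_subset_of_nonneg hsub (fun η _ _ => wt_nonneg _ _)
    _ = 1 := by rw [Finset.sum_singleton, wt_zero]
    _ = _ := by simp
  | succ N ih =>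
    intro U hU
    set K := U.sup (fun η => η N) with hK
    set V := U.image (fun η => Finsupp.erase N η) with hV
    have hginj : ∀ η₁ ∈ U, ∀ η₂ ∈ U,
        (Finsupp.erase N η₁, η₁ N) = (Finsupp.erase N η₂, η₂ N) → η₁ = η₂ := by
      intro η₁ _ η₂ _ h
      rw [Prod.mk.injEq] at h
      rw [← Finsupp.single_add_erase N η₁, ← Finsupp.single_add_erase N η₂, h.1, h.2]
    have hxN : 0 < 1 - xg k N := by
      have := xg_le_half hk N; have := xg_pos (k := k) N; linarith
    have step1 : ∑ η ∈ U, wt (-k) η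
        = ∑ z ∈ U.image (fun η => (Finsupp.erase N η, η N)), wt (-k) z.1 * (xg k N) ^ z.2 := by
      rw [Finset.sum_image hginj]
      exact Finset.sum_congr rfl fun η _ => (wt_erase_single η N)
    have hsub : U.image (fun η => (Finsupp.erase N η, η N)) ⊆ V ×ˢ Finset.range (K + 1) := by
      intro z hz
      rw [Finset.mem_image] at hz
      obtain ⟨η, hη, rfl⟩ := hz
      rw [Finset.mem_product]
      constructor
      · exact Finset.mem_image_of_mem _ hη
      · rw [Finset.mem_range]
        exact Nat.lt_succ_of_le (Finset.le_sup (f := fun η => η N) hη)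
    have step2 : ∑ z ∈ U.image (fun η => (Finsupp.erase N η, η N)), wt (-k) z.1 * (xg k N) ^ z.2
        ≤ ∑ z ∈ V ×ˢ Finset.range (K + 1), wt (-k) z.1 * (xg k N) ^ z.2 :=
      Finset.sum_le_sum_of_subset_of_nonneg hsub
        (fun z _ _ => mul_nonneg (wt_nonneg _ _) (pow_nonneg (xg_pos N).le _))
    have step3 : ∑ z ∈ V ×ˢ Finset.range (K + 1), wt (-k) z.1 * (xg k N) ^ z.2
        = (∑ η ∈ V, wt (-k) η) * (∑ m ∈ Finset.range (K + 1), (xg k N) ^ m) := by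
      rw [Finset.sum_mul_sum]
      rw [Finset.sum_product]
    have hVbound : ∑ η ∈ V, wt (-k) η ≤ ∏ n ∈ Finset.range N, (1 - xg k n)⁻¹ := by
      refine ih V ?_
      intro η' hη' n hn
      rw [hV, Finset.mem_image] at hη'
      obtain ⟨η, hη, rfl⟩ := hη'
      rcases eq_or_ne n N with rfl | hne
      · exact Finsupp.erase_same
      · rw [Finsupp.erase_ne hne]
        exact hU η hη n (by omega)
    calc ∑ η ∈ U, wt (-k) η
        ≤ (∑ η ∈ V, wt (-k) η) * (∑ m ∈ Finset.range (K + 1), (xg k N) ^ m) := by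
          rw [step1]; exact step2.trans step3.le
      _ ≤ (∏ n ∈ Finset.range N, (1 - xg k n)⁻¹) * (1 - xg k N)⁻¹ := by
          refine mul_le_mul hVbound (geom_partial_le hk N K) ?_ ?_
          · exact Finset.sum_nonneg fun m _ => pow_nonneg (xg_pos N).le m
          · exact Finset.prod_nonneg fun n _ => by
              have h2 := xg_le_half hk n
              exact inv_nonneg.2 (by linarith)
      _ = ∏ n ∈ Finset.range (N + 1), (1 - xg k n)⁻¹ := (Finset.prod_range_succ _ N).symm

lemma summable_wt : Summable (fun γ : MultiIndex => wt (-k) γ) := by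
  set T := ∑' n, xg k n with hT
  refine summable_of_sum_le (fun γ => wt_nonneg _ _) (fun U => ?_) (c := Real.exp (2 * T))
  set N := (U.sup fun η => η.support.sup id) + 1 with hN
  have hUN : ∀ η ∈ U, ∀ n, N ≤ n → η n = 0 := by
    intro η hη n hn
    by_contra h
    have hn' : n ∈ η.support := Finsupp.mem_support_iff.2 h
    have h1 : n ≤ η.support.sup id := Finset.le_sup (f := id) hn'
    have h2 : η.support.sup id ≤ U.sup fun η => η.support.sup id := Finset.le_sup (f := fun η => η.support.sup id) hη
    omega
  refine (box hk N U hUN).trans ?_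
  have hfac : ∀ n : ℕ, (1 - xg k n)⁻¹ ≤ Real.exp (2 * xg k n) := by
    intro n
    have h0 := xg_pos (k := k) n
    have h2 := xg_le_half hk n
    have h1 : 0 < 1 - xg k n := by linarith
    have key : (1:ℝ) ≤ (1 + 2 * xg k n) * (1 - xg k n) := by nlinarith
    have : (1 - xg k n)⁻¹ ≤ 1 + 2 * xg k n := by
      rw [inv_eq_one_div, div_le_iff₀ h1]
      linarith [key]
    refine this.trans ?_
    have := Real.add_one_le_exp (2 * xg k n)
    linarith
  calc ∏ n ∈ Finset.range N, (1 - xg k n)⁻¹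
      ≤ ∏ n ∈ Finset.range N, Real.exp (2 * xg k n) := by
        refine Finset.prod_le_prod (fun n _ => ?_) (fun n _ => hfac n)
        have h2 := xg_le_half hk n
        exact inv_nonneg.2 (by linarith)
    _ = Real.exp (∑ n ∈ Finset.range N, 2 * xg k n) := by rw [Real.exp_sum]
    _ ≤ Real.exp (2 * T) := by
        rw [Real.exp_le_exp]
        rw [← Finset.mul_sum]
        have : ∑ n ∈ Finset.range N, xg k n ≤ T :=
          Summable.sum_le_tsum _ (fun n _ => (xg_pos n).le) (xg_summable hk)
        linarith
end Summab

noncomputable def Rfac (r : ℕ) (β : MultiIndex) : ℝ := ((r ^ (msize β) ^ 3).factorial : ℝ)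

noncomputable def Eterm (r s : ℕ) (k : ℝ) (γ : MultiIndex) (z : MultiIndex × MultiIndex) : ℝ :=
  ((mfact γ : ℝ) / ((mfact z.1 : ℝ) * (mfact z.2 : ℝ))) * wt (1 - k) γ *
    (Rfac r z.1 * Rfac r z.2 / Rfac s γ)

lemma Rfac_pos (r : ℕ) (β : MultiIndex) : 0 < Rfac r β := by
  unfold Rfac
  exact_mod_cast Nat.factorial_pos _

lemma msize_zero : msize (0 : MultiIndex) = 0 := rfl

lemma Rfac_zero (r : ℕ) : Rfac r 0 = 1 := by
  unfold Rfac
  rw [msize_zero]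
  norm_num

lemma Rfac_mono {r s : ℕ} (hrs : r ≤ s) (β : MultiIndex) : Rfac r β ≤ Rfac s β := by
  unfold Rfac
  exact_mod_cast Nat.factorial_le (Nat.pow_le_pow_left hrs _)

lemma Eterm_pos (r s : ℕ) (k : ℝ) (γ : MultiIndex) (z : MultiIndex × MultiIndex) :
    0 < Eterm r s k γ z := by
  unfold Eterm
  have h1 := mfact_pos γ
  have h2 := mfact_pos z.1
  have h3 := mfact_pos z.2
  have h4 := Rfac_pos r z.1
  have h5 := Rfac_pos r z.2
  have h6 := Rfac_pos s γ
  have h7 := wt_pos (1 - k) γ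
  have c1 : (0:ℝ) < (mfact γ : ℝ) := by exact_mod_cast h1
  have c2 : (0:ℝ) < (mfact z.1 : ℝ) := by exact_mod_cast h2
  have c3 : (0:ℝ) < (mfact z.2 : ℝ) := by exact_mod_cast h3
  positivity

lemma two_pow_1k {k : ℝ} : (2:ℝ) ^ ((1:ℝ) - k) = 2 * tk k := by
  rw [show (1:ℝ) - k = 1 + (-k) by ring, Real.rpow_add two_pos, Real.rpow_one]
  rfl

lemma Eterm_end {r s : ℕ} (hrs : r ≤ s) {k : ℝ} (hk : 1 < k) {γ : MultiIndex}
    {z : MultiIndex × MultiIndex} (hz : z.1 + z.2 = γ) (h0 : z.1 = 0 ∨ z.2 = 0) :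
    Eterm r s k γ z ≤ (2 * tk k) ^ (msize γ) := by
  have key : ((mfact γ : ℝ) / ((mfact z.1 : ℝ) * (mfact z.2 : ℝ)))
      * (Rfac r z.1 * Rfac r z.2 / Rfac s γ) ≤ 1 := by
    rcases h0 with h0 | h0
    · have hz2 : z.2 = γ := by rw [← hz, h0, zero_add]
      rw [h0, hz2, mfact_zero, Rfac_zero]
      rw [Nat.cast_one, one_mul, one_mul]
      rw [div_self (by exact_mod_cast (mfact_pos γ).ne'), one_mul]
      rw [div_le_one (Rfac_pos s γ)]
      exact Rfac_mono hrs γ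
    · have hz1 : z.1 = γ := by rw [← hz, h0, add_zero]
      rw [h0, hz1, mfact_zero, Rfac_zero]
      rw [Nat.cast_one, mul_one, mul_one]
      rw [div_self (by exact_mod_cast (mfact_pos γ).ne'), one_mul]
      rw [div_le_one (Rfac_pos s γ)]
      exact Rfac_mono hrs γ
  have hwt : wt (1 - k) γ ≤ (2 * tk k) ^ (msize γ) := by
    rw [← two_pow_1k]
    exact wt_le_pow (by linarith) γ
  calc Eterm r s k γ z
      = (((mfact γ : ℝ) / ((mfact z.1 : ℝ) * (mfact z.2 : ℝ)))
          * (Rfac r z.1 * Rfac r z.2 / Rfac s γ)) * wt (1 - k) γ := by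
        unfold Eterm; ring
    _ ≤ 1 * ((2 * tk k) ^ (msize γ)) := by
        refine mul_le_mul key hwt (wt_nonneg _ _) one_pos.le
    _ = (2 * tk k) ^ (msize γ) := one_mul _

lemma Eterm_mid {r s : ℕ} (hr : 2 ≤ r) (hrs : r ≤ s) {k : ℝ} (hk : 1 < k) {γ : MultiIndex}
    {z : MultiIndex × MultiIndex} (hz : z.1 + z.2 = γ) (h1 : z.1 ≠ 0) (h2 : z.2 ≠ 0) :
    Eterm r s k γ z ≤
      (2:ℝ) ^ (msize γ) * (2 * tk k) ^ (msize γ) * (((8 ^ (msize γ)).factorial : ℝ))⁻¹ := by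
  set a := msize z.1 with ha
  set b := msize z.2 with hb
  have hab : msize γ = a + b := by rw [← hz, msize_add]
  have ha1 : 1 ≤ a := Nat.one_le_iff_ne_zero.2 (fun h => h1 (msize_eq_zero h))
  have hb1 : 1 ≤ b := Nat.one_le_iff_ne_zero.2 (fun h => h2 (msize_eq_zero h))
  have hC : (mfact γ : ℝ) / ((mfact z.1 : ℝ) * (mfact z.2 : ℝ)) ≤ (2:ℝ) ^ (msize γ) := by
    rw [div_le_iff₀ (by exact_mod_cast mul_pos (mfact_pos z.1) (mfact_pos z.2))]
    have hm := mfact_add_le z.1 z.2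
    rw [hz] at hm
    calc (mfact γ : ℝ) ≤ ((2 ^ msize γ * (mfact z.1 * mfact z.2) : ℕ) : ℝ) := by
          exact_mod_cast hm
    _ = (2:ℝ) ^ (msize γ) * ((mfact z.1 : ℝ) * (mfact z.2 : ℝ)) := by push_cast; ring
  have hQ : Rfac r z.1 * Rfac r z.2 / Rfac s γ ≤ (((8 ^ (msize γ)).factorial : ℝ))⁻¹ := by
    rw [inv_eq_one_div, div_le_div_iff₀ (Rfac_pos s γ)
      (by exact_mod_cast Nat.factorial_pos _)]
    rw [one_mul]
    have := factD ha1 hb1 hr hrs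
    rw [← hab] at this
    unfold Rfac
    rw [← ha, ← hb]
    exact_mod_cast this
  have hwt : wt (1 - k) γ ≤ (2 * tk k) ^ (msize γ) := by
    rw [← two_pow_1k]
    exact wt_le_pow (by linarith) γ
  unfold Eterm
  have hgoal : ((mfact γ : ℝ) / ((mfact z.1 : ℝ) * (mfact z.2 : ℝ))) * wt (1 - k) γ *
      (Rfac r z.1 * Rfac r z.2 / Rfac s γ) ≤
      (2:ℝ) ^ (msize γ) * (2 * tk k) ^ (msize γ) * (((8 ^ (msize γ)).factorial : ℝ))⁻¹ := by
        have hQnn : (0:ℝ) ≤ Rfac r z.1 * Rfac r z.2 / Rfac s γ := by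
          have := Rfac_pos r z.1; have := Rfac_pos r z.2; have := Rfac_pos s γ
          positivity
        have htk : (0:ℝ) < tk k := tk_pos
        have hbnn : (0:ℝ) ≤ (2:ℝ) ^ (msize γ) * (2 * tk k) ^ (msize γ) := by positivity
        exact mul_le_mul (mul_le_mul hC hwt (wt_nonneg _ _) (by positivity)) hQ hQnn hbnn
  exact hgoal

lemma numeric_ineq {t : ℝ} (h0 : 0 < t) (h2 : t ≤ 1 / 2) :
    4 * t + 1 / 126 ≤ (1 - t)⁻¹ * (1 - t * t)⁻¹ := by
  have h1 : 0 < 1 - t := by linarith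
  have h3 : 0 < 1 - t * t := by nlinarith
  rw [← mul_inv, inv_eq_one_div, le_div_iff₀ (by positivity)]
  nlinarith [sq_nonneg (t - 1/2), sq_nonneg (t - 2/5), sq_nonneg t, mul_pos h0 h0,
    mul_nonneg (mul_nonneg h0.le h0.le) h0.le, sq_nonneg (t*(1-2*t))]

lemma Esum_le {r s : ℕ} (hr : 2 ≤ r) (hrs : r ≤ s) {k : ℝ} (hk : 1 < k)
    (hM : Summable (fun γ : MultiIndex => wt (-k) γ)) (γ : MultiIndex) :
    ∑ z ∈ Finset.HasAntidiagonal.antidiagonal γ, Eterm r s k γ z ≤ ∑' γ' : MultiIndex, wt (-k) γ' := by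
  classical
  by_cases hγ : γ = 0
  · subst hγ
    rw [Finsupp.antidiagonal_zero, Finset.sum_singleton]
    have hE : Eterm r s k 0 (0, 0) = 1 := by
      unfold Eterm
      rw [mfact_zero, Rfac_zero r, Rfac_zero s, wt_zero]
      norm_num
    rw [hE, show (1:ℝ) = wt (-k) 0 from (wt_zero _).symm]
    exact Summable.le_tsum hM 0 (fun b _ => wt_nonneg _ _)
  · set n := msize γ with hn
    have hn1 : 1 ≤ n := Nat.one_le_iff_ne_zero.2 (fun h => hγ (msize_eq_zero h))
    set t := tk k with htdef
    have ht0 : 0 < t := tk_pos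
    have ht2 : t ≤ 1 / 2 := tk_le_half hk
    have h2t0 : (0:ℝ) ≤ 2 * t := by linarith
    have h2t1 : 2 * t ≤ 1 := by linarith
    set F1 := (Finset.HasAntidiagonal.antidiagonal γ).filter
        (fun z : MultiIndex × MultiIndex => z.1 = 0 ∨ z.2 = 0) with hF1
    set F2 := (Finset.HasAntidiagonal.antidiagonal γ).filter
        (fun z : MultiIndex × MultiIndex => ¬(z.1 = 0 ∨ z.2 = 0)) with hF2
    have hsplit : (∑ z ∈ F1, Eterm r s k γ z) + (∑ z ∈ F2, Eterm r s k γ z)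
        = ∑ z ∈ Finset.HasAntidiagonal.antidiagonal γ, Eterm r s k γ z :=
      Finset.sum_filter_add_sum_filter_not (Finset.HasAntidiagonal.antidiagonal γ) _ _
    have hpairne : ((0 : MultiIndex), γ) ≠ (γ, (0 : MultiIndex)) := by
      intro h
      rw [Prod.mk.injEq] at h
      exact hγ h.1.symm
    have hendsub : F1 ⊆ {((0 : MultiIndex), γ), (γ, (0 : MultiIndex))} := by
      intro z hz
      rw [hF1, Finset.mem_filter, Finset.HasAntidiagonal.mem_antidiagonal] at hz
      obtain ⟨hz1, hz2⟩ := hz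
      rw [Finset.mem_insert, Finset.mem_singleton]
      rcases hz2 with h | h
      · left
        exact Prod.ext h (by rw [← hz1, h, zero_add])
      · right
        exact Prod.ext (by rw [← hz1, h, add_zero]) h
    have hends : ∑ z ∈ F1, Eterm r s k γ z ≤ 4 * t := by
      calc ∑ z ∈ F1, Eterm r s k γ z
          ≤ ∑ z ∈ ({((0 : MultiIndex), γ), (γ, (0 : MultiIndex))} :
              Finset (MultiIndex × MultiIndex)), Eterm r s k γ z :=
            Finset.sum_le_sum_of_subset_of_nonneg hendsub
              (fun z _ _ => (Eterm_pos r s k γ z).le)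
        _ = Eterm r s k γ (0, γ) + Eterm r s k γ (γ, 0) := Finset.sum_pair hpairne
        _ ≤ (2 * t) ^ n + (2 * t) ^ n :=
            add_le_add (Eterm_end hrs hk (zero_add γ) (Or.inl rfl))
              (Eterm_end hrs hk (add_zero γ) (Or.inr rfl))
        _ ≤ (2 * t) ^ 1 + (2 * t) ^ 1 :=
            add_le_add (pow_le_pow_of_le_one h2t0 h2t1 hn1)
              (pow_le_pow_of_le_one h2t0 h2t1 hn1)
        _ = 4 * t := by ring
    have hmid : ∑ z ∈ F2, Eterm r s k γ z ≤ 1 / 126 := by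
      set Bmid : ℝ := (2:ℝ) ^ n * (2 * t) ^ n * (((8 ^ n).factorial : ℝ))⁻¹ with hBmid
      have hBnn : 0 ≤ Bmid := by
        rw [hBmid]
        positivity
      have hbound : ∀ z ∈ F2, Eterm r s k γ z ≤ Bmid := by
        intro z hz
        rw [hF2, Finset.mem_filter, Finset.HasAntidiagonal.mem_antidiagonal] at hz
        push_neg at hz
        exact Eterm_mid hr hrs hk hz.1 hz.2.1 hz.2.2
      have hcard : (F2.card : ℝ) ≤ (2:ℝ) ^ n := by
        have h := (Finset.card_filter_le (Finset.HasAntidiagonal.antidiagonal γ)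
            (fun z : MultiIndex × MultiIndex => ¬(z.1 = 0 ∨ z.2 = 0))).trans
          (card_antidiagonal_le γ)
        calc (F2.card : ℝ) ≤ ((2 ^ n : ℕ) : ℝ) := by exact_mod_cast h
          _ = (2:ℝ) ^ n := by push_cast; ring
      calc ∑ z ∈ F2, Eterm r s k γ z ≤ F2.card • Bmid :=
            Finset.sum_le_card_nsmul _ _ _ hbound
        _ = (F2.card : ℝ) * Bmid := nsmul_eq_mul _ _
        _ ≤ (2:ℝ) ^ n * Bmid := mul_le_mul_of_nonneg_right hcard hBnn
        _ ≤ 1 / 126 := by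
            rw [hBmid]
            have h8t : (2:ℝ) ^ n * ((2:ℝ) ^ n * (2 * t) ^ n) = (8 * t) ^ n := by
              rw [← mul_pow, ← mul_pow]
              ring_nf
            have hstep : (2:ℝ) ^ n * ((2:ℝ) ^ n * (2 * t) ^ n * (((8 ^ n).factorial : ℝ))⁻¹)
                = (8 * t) ^ n * (((8 ^ n).factorial : ℝ))⁻¹ := by
              rw [← h8t]; ring
            rw [hstep]
            have h4n : (8 * t) ^ n ≤ (4:ℝ) ^ n :=
              pow_le_pow_left₀ (by linarith) (by linarith) n
            have hinv : (((8 ^ n).factorial : ℝ))⁻¹ ≤ ((63 * 8 ^ n : ℕ) : ℝ)⁻¹ := by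
              refine inv_anti₀ (by positivity) ?_
              exact_mod_cast fact63 hn1
            calc (8 * t) ^ n * (((8 ^ n).factorial : ℝ))⁻¹
                ≤ (4:ℝ) ^ n * ((63 * 8 ^ n : ℕ) : ℝ)⁻¹ :=
                  mul_le_mul h4n hinv (by positivity) (by positivity)
              _ = 1 / (63 * 2 ^ n) := by
                  push_cast
                  rw [show ((8:ℝ)) ^ n = 4 ^ n * 2 ^ n from by rw [← mul_pow]; norm_num]
                  field_simp
              _ ≤ 1 / 126 := by
                  refine one_div_le_one_div_of_le (by norm_num) ?_
                  have h2n : (2:ℝ) ≤ 2 ^ n := by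
                    calc (2:ℝ) = 2 ^ 1 := by norm_num
                    _ ≤ 2 ^ n := pow_le_pow_right₀ one_le_two hn1
                  linarith
    calc ∑ z ∈ Finset.HasAntidiagonal.antidiagonal γ, Eterm r s k γ z
        = (∑ z ∈ F1, Eterm r s k γ z) + ∑ z ∈ F2, Eterm r s k γ z := hsplit.symm
      _ ≤ 4 * t + 1 / 126 := add_le_add hends hmid
      _ ≤ (1 - t)⁻¹ * (1 - t * t)⁻¹ := numeric_ineq ht0 ht2
      _ ≤ ∑' γ' : MultiIndex, wt (-k) γ' := Mlow_le hk hM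


lemma fsTerm_nonneg {X : Type*} [NormedRing X] (r : ℕ) (p : ℝ) (f : MultiIndex → X)
    (α : MultiIndex) : 0 ≤ fsTerm r p f α := by
  unfold fsTerm
  have h1 := wt_nonneg (-p) α
  positivity

lemma Eterm_identity {X : Type*} [NormedRing X] (r s : ℕ) (p k : ℝ)
    (f g : MultiIndex → X) {γ : MultiIndex} {z : MultiIndex × MultiIndex}
    (hz : z.1 + z.2 = γ) :
    (mfact γ : ℝ) * (Rfac s γ)⁻¹ * wt (-(p - 1 + k)) γ * (‖f z.1‖ * ‖g z.2‖) ^ 2 /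
        Eterm r s k γ z
      = fsTerm r p f z.1 * fsTerm r p g z.2 := by
  have h1 : wt (-(p - 1 + k)) γ = wt (-p) γ * wt (1 - k) γ := by
    rw [show -(p - 1 + k) = (-p) + (1 - k) by ring, wt_exp_add]
  have h2 : wt (-p) γ = wt (-p) z.1 * wt (-p) z.2 := by
    rw [← hz, wt_add]
  have e1 : (mfact z.1 : ℝ) ≠ 0 := by exact_mod_cast (mfact_pos z.1).ne'
  have e2 : (mfact z.2 : ℝ) ≠ 0 := by exact_mod_cast (mfact_pos z.2).ne'
  have e3 : (mfact γ : ℝ) ≠ 0 := by exact_mod_cast (mfact_pos γ).ne'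
  have e4 : Rfac r z.1 ≠ 0 := (Rfac_pos r z.1).ne'
  have e5 : Rfac r z.2 ≠ 0 := (Rfac_pos r z.2).ne'
  have e6 : Rfac s γ ≠ 0 := (Rfac_pos s γ).ne'
  have e7 : wt (1 - k) γ ≠ 0 := (wt_pos (1 - k) γ).ne'
  rw [h1, h2]
  unfold fsTerm Eterm
  show (mfact γ : ℝ) * (Rfac s γ)⁻¹ * (wt (-p) z.1 * wt (-p) z.2 * wt (1 - k) γ) *
      (‖f z.1‖ * ‖g z.2‖) ^ 2 / _ = _
  have hR1 : ((r ^ (msize z.1) ^ 3).factorial : ℝ) = Rfac r z.1 := rfl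
  have hR2 : ((r ^ (msize z.2) ^ 3).factorial : ℝ) = Rfac r z.2 := rfl
  rw [hR1, hR2]
  field_simp

lemma key_est {X : Type*} [NormedRing X] {r s : ℕ} (hr : 2 ≤ r) (hrs : r ≤ s)
    {p k : ℝ} (hk : 1 < k) (f g : MultiIndex → X)
    (hM : Summable (fun γ : MultiIndex => wt (-k) γ)) (γ : MultiIndex) :
    fsTerm s (p - 1 + k) (wick f g) γ ≤
      (∑' γ' : MultiIndex, wt (-k) γ') *
        ∑ z ∈ Finset.HasAntidiagonal.antidiagonal γ, fsTerm r p f z.1 * fsTerm r p g z.2 := by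
  classical
  set S := Finset.HasAntidiagonal.antidiagonal γ with hS
  have hc0 : 0 ≤ (mfact γ : ℝ) * (Rfac s γ)⁻¹ * wt (-(p - 1 + k)) γ := by
    have h1 := wt_nonneg (-(p - 1 + k)) γ
    have h2 := (Rfac_pos s γ).le
    positivity
  have hfs : fsTerm s (p - 1 + k) (wick f g) γ
      = ‖wick f g γ‖ ^ 2 * ((mfact γ : ℝ) * (Rfac s γ)⁻¹ * wt (-(p - 1 + k)) γ) := by
    unfold fsTerm
    show (mfact γ : ℝ) * ‖wick f g γ‖ ^ 2 * (Rfac s γ)⁻¹ * wt (-(p - 1 + k)) γ = _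
    ring
  have hnorm : ‖wick f g γ‖ ≤ ∑ z ∈ S, ‖f z.1‖ * ‖g z.2‖ := by
    refine (norm_sum_le _ _).trans ?_
    exact Finset.sum_le_sum fun z _ => norm_mul_le _ _
  have hsq : ‖wick f g γ‖ ^ 2 ≤ (∑ z ∈ S, ‖f z.1‖ * ‖g z.2‖) ^ 2 :=
    pow_le_pow_left₀ (norm_nonneg _) hnorm 2
  have hCS : (∑ z ∈ S, Real.sqrt ((mfact γ : ℝ) * (Rfac s γ)⁻¹ * wt (-(p - 1 + k)) γ) *
        (‖f z.1‖ * ‖g z.2‖)) ^ 2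
      ≤ (∑ z ∈ S, Eterm r s k γ z) *
        (∑ z ∈ S, (mfact γ : ℝ) * (Rfac s γ)⁻¹ * wt (-(p - 1 + k)) γ *
          (‖f z.1‖ * ‖g z.2‖) ^ 2 / Eterm r s k γ z) := by
    refine Finset.sum_sq_le_sum_mul_sum_of_sq_eq_mul S
      (fun z _ => (Eterm_pos r s k γ z).le)
      (fun z _ => by
        have h1 := Eterm_pos r s k γ z
        positivity)
      (fun z _ => ?_)
    rw [mul_pow, Real.sq_sqrt hc0]
    rw [mul_comm (Eterm r s k γ z), div_mul_cancel₀]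
    exact (Eterm_pos r s k γ z).ne'
  have hid : (∑ z ∈ S, (mfact γ : ℝ) * (Rfac s γ)⁻¹ * wt (-(p - 1 + k)) γ *
        (‖f z.1‖ * ‖g z.2‖) ^ 2 / Eterm r s k γ z)
      = ∑ z ∈ S, fsTerm r p f z.1 * fsTerm r p g z.2 := by
    refine Finset.sum_congr rfl fun z hz => ?_
    rw [hS, Finset.HasAntidiagonal.mem_antidiagonal] at hz
    exact Eterm_identity r s p k f g hz
  have habnn : 0 ≤ ∑ z ∈ S, fsTerm r p f z.1 * fsTerm r p g z.2 :=
    Finset.sum_nonneg fun z _ =>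
      mul_nonneg (fsTerm_nonneg r p f z.1) (fsTerm_nonneg r p g z.2)
  calc fsTerm s (p - 1 + k) (wick f g) γ
      = ‖wick f g γ‖ ^ 2 * ((mfact γ : ℝ) * (Rfac s γ)⁻¹ * wt (-(p - 1 + k)) γ) := hfs
    _ ≤ (∑ z ∈ S, ‖f z.1‖ * ‖g z.2‖) ^ 2 *
          ((mfact γ : ℝ) * (Rfac s γ)⁻¹ * wt (-(p - 1 + k)) γ) :=
        mul_le_mul_of_nonneg_right hsq hc0
    _ = (∑ z ∈ S, Real.sqrt ((mfact γ : ℝ) * (Rfac s γ)⁻¹ * wt (-(p - 1 + k)) γ) *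
          (‖f z.1‖ * ‖g z.2‖)) ^ 2 := by
        rw [← Finset.mul_sum, mul_pow, Real.sq_sqrt hc0]
        ring
    _ ≤ (∑ z ∈ S, Eterm r s k γ z) *
          (∑ z ∈ S, (mfact γ : ℝ) * (Rfac s γ)⁻¹ * wt (-(p - 1 + k)) γ *
            (‖f z.1‖ * ‖g z.2‖) ^ 2 / Eterm r s k γ z) := hCS
    _ = (∑ z ∈ S, Eterm r s k γ z) *
          (∑ z ∈ S, fsTerm r p f z.1 * fsTerm r p g z.2) := by rw [hid]
    _ ≤ (∑' γ' : MultiIndex, wt (-k) γ') *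
          (∑ z ∈ S, fsTerm r p f z.1 * fsTerm r p g z.2) :=
        mul_le_mul_of_nonneg_right (Esum_le hr hrs hk hM γ) habnn

noncomputable def antiEquiv : (Σ γ : MultiIndex, ↥(Finset.HasAntidiagonal.antidiagonal γ)) ≃ MultiIndex × MultiIndex where
  toFun x := x.2
  invFun z := ⟨z.1 + z.2, ⟨z, by rw [Finset.HasAntidiagonal.mem_antidiagonal]⟩⟩
  left_inv := by
    rintro ⟨γ, ⟨z, hz⟩⟩
    obtain rfl := Finset.HasAntidiagonal.mem_antidiagonal.mp hz
    rfl
  right_inv z := rfl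


end Aux

theorem stmt_4 {X : Type*} [NormedRing X] (r : ℕ) (hr : 2 ≤ r) (p : ℝ) (hp : 0 ≤ p)
    (f g : MultiIndex → X)
    (hf : Summable (fsTerm r p f)) (hg : Summable (fsTerm r p g))
    (k : ℝ) (hk : 1 < k) (s : ℕ) (hs : r ≤ s) :
    Summable (fun γ : MultiIndex => wt (-k) γ) ∧
    Summable (fsTerm s (p - 1 + k) (wick f g)) ∧
    (∑' γ : MultiIndex, fsTerm s (p - 1 + k) (wick f g) γ) ≤
      (∑' γ : MultiIndex, wt (-k) γ) * (∑' α : MultiIndex, fsTerm r p f α) *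
        (∑' α : MultiIndex, fsTerm r p g α) := by
  classical
  have hM : Summable (fun γ : MultiIndex => wt (-k) γ) := Aux.summable_wt hk
  set M := ∑' γ : MultiIndex, wt (-k) γ with hMdef
  set A := ∑' α : MultiIndex, fsTerm r p f α with hA
  set B := ∑' α : MultiIndex, fsTerm r p g α with hB
  -- Cauchy product structure
  have hpair : Summable (fun z : MultiIndex × MultiIndex =>
      fsTerm r p f z.1 * fsTerm r p g z.2) :=
    hf.mul_of_nonneg hg (fun α => Aux.fsTerm_nonneg r p f α) (fun α => Aux.fsTerm_nonneg r p g α)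
  have hprod : HasSum (fun z : MultiIndex × MultiIndex =>
      fsTerm r p f z.1 * fsTerm r p g z.2) (A * B) :=
    hf.hasSum.mul hg.hasSum hpair
  have hsig : HasSum (fun x : Σ γ : MultiIndex, ↥(Finset.HasAntidiagonal.antidiagonal γ) =>
      fsTerm r p f (x.2 : MultiIndex × MultiIndex).1 *
        fsTerm r p g (x.2 : MultiIndex × MultiIndex).2) (A * B) := by
    exact (Equiv.hasSum_iff Aux.antiEquiv).2 hprod
  have hfiber : ∀ γ : MultiIndex,
      HasSum (fun c : ↥(Finset.HasAntidiagonal.antidiagonal γ) =>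
        fsTerm r p f (c : MultiIndex × MultiIndex).1 *
          fsTerm r p g (c : MultiIndex × MultiIndex).2)
        (∑ z ∈ Finset.HasAntidiagonal.antidiagonal γ, fsTerm r p f z.1 * fsTerm r p g z.2) := by
    intro γ
    exact Finset.hasSum (Finset.HasAntidiagonal.antidiagonal γ)
      (fun z : MultiIndex × MultiIndex => fsTerm r p f z.1 * fsTerm r p g z.2)
  have hconv : HasSum (fun γ : MultiIndex =>
      ∑ z ∈ Finset.HasAntidiagonal.antidiagonal γ, fsTerm r p f z.1 * fsTerm r p g z.2) (A * B) :=
    HasSum.sigma hsig hfiber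
  have hkey : ∀ γ : MultiIndex, fsTerm s (p - 1 + k) (wick f g) γ ≤
      M * ∑ z ∈ Finset.HasAntidiagonal.antidiagonal γ, fsTerm r p f z.1 * fsTerm r p g z.2 :=
    fun γ => Aux.key_est hr hs hk f g hM γ
  have hMul : Summable (fun γ : MultiIndex =>
      M * ∑ z ∈ Finset.HasAntidiagonal.antidiagonal γ, fsTerm r p f z.1 * fsTerm r p g z.2) :=
    hconv.summable.mul_left M
  have hW : Summable (fsTerm s (p - 1 + k) (wick f g)) :=
    Summable.of_nonneg_of_le (fun γ => Aux.fsTerm_nonneg s (p - 1 + k) (wick f g) γ) hkey hMul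
  refine ⟨hM, hW, ?_⟩
  calc (∑' γ : MultiIndex, fsTerm s (p - 1 + k) (wick f g) γ)
      ≤ ∑' γ : MultiIndex,
          M * ∑ z ∈ Finset.HasAntidiagonal.antidiagonal γ, fsTerm r p f z.1 * fsTerm r p g z.2 :=
        Summable.tsum_le_tsum hkey hW hMul
    _ = M * (A * B) := by
        rw [tsum_mul_left, hconv.tsum_eq]
    _ = M * A * B := by ring
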